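/- (Optimality of the exchange algorithm for the local-search subproblem) Let d ∈ ℝ^m with d_j ≥ 0, let S̄ ⊆ {1,…,m} with |S̄| = C, and let Δ be a nonnegative even integer with Δ/2 ≤ min(C, m − C). Let σ¹_1,…,σ¹_{Δ/2} be indices of the Δ/2 smallest values of d within S̄ (sorted increasingly) and σ²_1,…,σ²_{Δ/2} the indices of the Δ/2 largest values of d within the complement of S̄ (sorted decreasingly). For t = 1,…,Δ/2 set γ(t) = ∑_{h=1}^t (d_{σ²_h} − d_{σ¹_h}), let t* maximize γ(t) over t ∈ {0,1,…,Δ/2} (with γ(0)=0), and let S* = (S̄ ∪ {σ²_1,…,σ²_{t*}}) \ {σ¹_1,…,σ¹_{t*}}. Then for every S ⊆ {1,…,m} with |S| = C and |S △ S̄| ≤ Δ, it holds that ∑_{j∈S} d_j ≤ ∑_{j∈S*} d_j. -/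

import Mathlib

open Finset

lemma exch_top_bound {m : ℕ} (d : Fin m → ℝ) (Sb : Finset (Fin m)) (k : ℕ)
    (σ2 : ℕ → Fin m)
    (hσ2sorted : ∀ a b, a ≤ b → b < k → d (σ2 b) ≤ d (σ2 a))
    (hσ2max : ∀ h, h < k → ∀ j, j ∉ Sb → (∀ h', h' < k → j ≠ σ2 h') →
      d j ≤ d (σ2 h)) :
    ∀ t, t ≤ k → ∀ B : Finset (Fin m), (∀ b ∈ B, b ∉ Sb) → B.card = t →
      ∑ j ∈ B, d j ≤ ∑ h ∈ Finset.range t, d (σ2 h) := by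
  intro t
  induction t with
  | zero => intro _ B _ hB; simp [Finset.card_eq_zero.mp hB]
  | succ t ih =>
    intro hle B hBout hBcard
    have htk : t < k := hle
    have hBne : B.Nonempty := Finset.card_pos.mp (by omega)
    obtain ⟨j, hjB, hjmin⟩ := B.exists_min_image d hBne
    have hex : ∃ b ∈ B, b ∉ (Finset.range t).image σ2 := by
      by_contra h
      push_neg at h
      have h1 := Finset.card_le_card h
      have h2 : ((Finset.range t).image σ2).card ≤ t :=
        Finset.card_image_le.trans (by simp)
      omega
    obtain ⟨b, hbB, hbnot⟩ := hex
    have hdb : d b ≤ d (σ2 t) := by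
      by_cases hcase : ∃ h', h' < k ∧ b = σ2 h'
      · obtain ⟨h', hh', rfl⟩ := hcase
        have hth' : t ≤ h' := by
          by_contra h
          push_neg at h
          exact hbnot (Finset.mem_image.mpr ⟨h', Finset.mem_range.mpr h, rfl⟩)
        exact hσ2sorted t h' hth' hh'
      · push_neg at hcase
        exact hσ2max t htk b (hBout b hbB) hcase
    have hdj : d j ≤ d (σ2 t) := le_trans (hjmin b hbB) hdb
    have hih := ih (le_of_lt htk) (B.erase j)
      (fun b hb => hBout b (Finset.mem_of_mem_erase hb))
      (by rw [Finset.card_erase_of_mem hjB, hBcard]; omega)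
    rw [Finset.sum_range_succ, ← Finset.sum_erase_add B d hjB]
    exact add_le_add hih hdj

lemma exch_bot_bound {m : ℕ} (d : Fin m → ℝ) (Sb : Finset (Fin m)) (k : ℕ)
    (σ1 : ℕ → Fin m)
    (hσ1sorted : ∀ a b, a ≤ b → b < k → d (σ1 a) ≤ d (σ1 b))
    (hσ1min : ∀ h, h < k → ∀ j ∈ Sb, (∀ h', h' < k → j ≠ σ1 h') →
      d (σ1 h) ≤ d j) :
    ∀ t, t ≤ k → ∀ B : Finset (Fin m), (∀ b ∈ B, b ∈ Sb) → B.card = t →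
      ∑ h ∈ Finset.range t, d (σ1 h) ≤ ∑ j ∈ B, d j := by
  intro t
  induction t with
  | zero => intro _ B _ hB; simp [Finset.card_eq_zero.mp hB]
  | succ t ih =>
    intro hle B hBin hBcard
    have htk : t < k := hle
    have hBne : B.Nonempty := Finset.card_pos.mp (by omega)
    obtain ⟨j, hjB, hjmax⟩ := B.exists_max_image d hBne
    have hex : ∃ b ∈ B, b ∉ (Finset.range t).image σ1 := by
      by_contra h
      push_neg at h
      have h1 := Finset.card_le_card h
      have h2 : ((Finset.range t).image σ1).card ≤ t :=
        Finset.card_image_le.trans (by simp)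
      omega
    obtain ⟨b, hbB, hbnot⟩ := hex
    have hdb : d (σ1 t) ≤ d b := by
      by_cases hcase : ∃ h', h' < k ∧ b = σ1 h'
      · obtain ⟨h', hh', rfl⟩ := hcase
        have hth' : t ≤ h' := by
          by_contra h
          push_neg at h
          exact hbnot (Finset.mem_image.mpr ⟨h', Finset.mem_range.mpr h, rfl⟩)
        exact hσ1sorted t h' hth' hh'
      · push_neg at hcase
        exact hσ1min t htk b (hBin b hbB) hcase
    have hdj : d (σ1 t) ≤ d j := le_trans hdb (hjmax b hbB)
    have hih := ih (le_of_lt htk) (B.erase j)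
      (fun b hb => hBin b (Finset.mem_of_mem_erase hb))
      (by rw [Finset.card_erase_of_mem hjB, hBcard]; omega)
    rw [Finset.sum_range_succ, ← Finset.sum_erase_add B d hjB]
    exact add_le_add hih hdj

/-- Optimality of the greedy exchange algorithm for the gradient-based local
search subproblem: exchanging the `t*` smallest-coefficient elements of `S̄`
with the `t*` largest-coefficient elements outside `S̄` (for the best `t*`)
yields an optimal solution among all sets of cardinality `C` within symmetric
difference `Δ = 2k` of `S̄`. -/
theorem exchange_algorithm_optimal (m : ℕ) (d : Fin m → ℝ)
    (hd : ∀ j, 0 ≤ d j)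
    (Sb : Finset (Fin m)) (C : ℕ) (hScard : Sb.card = C)
    (k : ℕ) (hkC : k ≤ C) (hkm : k ≤ m - C)
    (σ1 σ2 : ℕ → Fin m)
    (hσ1inj : ∀ a b, a < k → b < k → σ1 a = σ1 b → a = b)
    (hσ2inj : ∀ a b, a < k → b < k → σ2 a = σ2 b → a = b)
    (hσ1mem : ∀ h, h < k → σ1 h ∈ Sb)
    (hσ2mem : ∀ h, h < k → σ2 h ∉ Sb)
    (hσ1sorted : ∀ a b, a ≤ b → b < k → d (σ1 a) ≤ d (σ1 b))
    (hσ2sorted : ∀ a b, a ≤ b → b < k → d (σ2 b) ≤ d (σ2 a))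
    (hσ1min : ∀ h, h < k → ∀ j ∈ Sb, (∀ h', h' < k → j ≠ σ1 h') →
      d (σ1 h) ≤ d j)
    (hσ2max : ∀ h, h < k → ∀ j, j ∉ Sb → (∀ h', h' < k → j ≠ σ2 h') →
      d j ≤ d (σ2 h))
    (γ : ℕ → ℝ)
    (hγ : ∀ t, γ t = ∑ h ∈ Finset.range t, (d (σ2 h) - d (σ1 h)))
    (tstar : ℕ) (htstar : tstar ≤ k)
    (hopt : ∀ t, t ≤ k → γ t ≤ γ tstar)
    (Sstar : Finset (Fin m))
    (hSstar : Sstar =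
      (Sb ∪ (Finset.range tstar).image σ2) \ (Finset.range tstar).image σ1) :
    ∀ S : Finset (Fin m), S.card = C → (symmDiff S Sb).card ≤ 2 * k →
      ∑ j ∈ S, d j ≤ ∑ j ∈ Sstar, d j := by
  classical
  -- First compute the value of Sstar
  set A1 := (Finset.range tstar).image σ1 with hA1
  set A2 := (Finset.range tstar).image σ2 with hA2
  have hA1sub : A1 ⊆ Sb := by
    intro x hx
    obtain ⟨h, hh, rfl⟩ := Finset.mem_image.mp hx
    exact hσ1mem h (lt_of_lt_of_le (Finset.mem_range.mp hh) htstar)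
  have hA2dis : Disjoint Sb A2 := by
    rw [Finset.disjoint_right]
    intro x hx
    obtain ⟨h, hh, rfl⟩ := Finset.mem_image.mp hx
    exact hσ2mem h (lt_of_lt_of_le (Finset.mem_range.mp hh) htstar)
  have hsumA1 : ∑ j ∈ A1, d j = ∑ h ∈ Finset.range tstar, d (σ1 h) := by
    rw [hA1, Finset.sum_image]
    intro a ha b hb hab
    exact hσ1inj a b (lt_of_lt_of_le (Finset.mem_range.mp ha) htstar)
      (lt_of_lt_of_le (Finset.mem_range.mp hb) htstar) hab
  have hsumA2 : ∑ j ∈ A2, d j = ∑ h ∈ Finset.range tstar, d (σ2 h) := by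
    rw [hA2, Finset.sum_image]
    intro a ha b hb hab
    exact hσ2inj a b (lt_of_lt_of_le (Finset.mem_range.mp ha) htstar)
      (lt_of_lt_of_le (Finset.mem_range.mp hb) htstar) hab
  have hSstarval : ∑ j ∈ Sstar, d j = ∑ j ∈ Sb, d j + γ tstar := by
    rw [hSstar, Finset.sum_sdiff_eq_sub (hA1sub.trans Finset.subset_union_left),
      Finset.sum_union hA2dis, hsumA1, hsumA2, hγ, Finset.sum_sub_distrib]
    ring
  intro S hScard' hsym
  -- cardinalities
  have hcard1 : (S \ Sb).card + (S ∩ Sb).card = C := by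
    rw [Finset.card_sdiff_add_card_inter, hScard']
  have hcard2 : (Sb \ S).card + (Sb ∩ S).card = C := by
    rw [Finset.card_sdiff_add_card_inter, hScard]
  have hinter : (S ∩ Sb).card = (Sb ∩ S).card := by rw [Finset.inter_comm]
  set t := (S \ Sb).card with ht
  have hteq : (Sb \ S).card = t := by omega
  have hsymcard : (symmDiff S Sb).card = 2 * t := by
    rw [symmDiff_def]
    have hdisj : Disjoint (S \ Sb) (Sb \ S) := by
      rw [Finset.disjoint_left]
      intro x hx hx'
      exact (Finset.mem_sdiff.mp hx').2 (Finset.mem_sdiff.mp hx).1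
    rw [Finset.sup_eq_union, Finset.card_union_of_disjoint hdisj, hteq]
    omega
  have htk : t ≤ k := by omega
  -- sum decomposition of S
  have hS : ∑ j ∈ S, d j =
      ∑ j ∈ Sb, d j + (∑ j ∈ S \ Sb, d j - ∑ j ∈ Sb \ S, d j) := by
    have e1 : ∑ j ∈ S, d j = ∑ j ∈ S ∩ Sb, d j + ∑ j ∈ S \ Sb, d j := by
      rw [Finset.sum_inter_add_sum_sdiff]
    have e2 : ∑ j ∈ Sb, d j = ∑ j ∈ Sb ∩ S, d j + ∑ j ∈ Sb \ S, d j := by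
      rw [Finset.sum_inter_add_sum_sdiff]
    rw [e1, e2, Finset.inter_comm]
    ring
  have htop := exch_top_bound d Sb k σ2 hσ2sorted hσ2max t htk (S \ Sb)
    (fun b hb => (Finset.mem_sdiff.mp hb).2) rfl
  have hbot := exch_bot_bound d Sb k σ1 hσ1sorted hσ1min t htk (Sb \ S)
    (fun b hb => (Finset.mem_sdiff.mp hb).1) hteq
  have hγt : ∑ j ∈ S \ Sb, d j - ∑ j ∈ Sb \ S, d j ≤ γ t := by
    rw [hγ, Finset.sum_sub_distrib]
    exact sub_le_sub htop hbot
  rw [hS, hSstarval]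
  exact add_le_add_right (hγt.trans (hopt t htk)) _
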